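/- arXiv:2004.09641 — 2 statements merged into one kernel-verified Lean document; each statement's English description precedes it below -/
import Mathlib

section
/- Let G be a finite group and D : G → GL(N,ℝ) the block-diagonal representation built from Σ₁,…,Σ_s with multiplicities m₁,…,m_s as in the context, with every matrix Σᵢ(g) orthogonal. Then every real symmetric N×N matrix Q satisfying D(g)ᵀQD(g) = Q for all g ∈ G has the block structure in which the block of Q joining copy k of Σᵢ to copy l of Σⱼ is zero for i ≠ j and equals (Mᵢ)_{kl}·I_{nᵢ} for i = j, where Mᵢ is a symmetric mᵢ×mᵢ real matrix; moreover Q is positive semidefinite if and only if every Mᵢ (i = 1,…,s) is positive semidefinite. -/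
open Matrix

/-- Corollary 2.5. With all `Σᵢ(g)` orthogonal, every symmetric `Q`
with `D(g)ᵀ Q D(g) = Q` for all `g` has block structure `diag` of scalar blocks
`(Mᵢ)_{kl} • I_{nᵢ}` with `Mᵢ` symmetric, vanishing between distinct isotypic
components; and `Q` is PSD iff every `Mᵢ` is PSD. -/
theorem stmt_2
    (G : Type*) [Group G] [Finite G]
    (s : ℕ) (hs : 1 ≤ s)
    (n m : Fin s → ℕ)
    (Sig : ∀ i : Fin s, G → Matrix (Fin (n i)) (Fin (n i)) ℝ)
    (hSigOne : ∀ i, Sig i 1 = 1)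
    (hSigMul : ∀ i g h, Sig i (g * h) = Sig i g * Sig i h)
    (hSigOrth : ∀ i g, (Sig i g)ᵀ * Sig i g = 1)
    (hSchurDiag : ∀ (i : Fin s) (M : Matrix (Fin (n i)) (Fin (n i)) ℝ),
      (∀ g, Sig i g * M = M * Sig i g) →
        ∃ c : ℝ, M = c • (1 : Matrix (Fin (n i)) (Fin (n i)) ℝ))
    (hSchurOff : ∀ (i j : Fin s), i ≠ j → ∀ M : Matrix (Fin (n i)) (Fin (n j)) ℝ,
      (∀ g, Sig i g * M = M * Sig j g) → M = 0)
    (D : G → Matrix (Σ i : Fin s, Fin (n i) × Fin (m i)) (Σ i : Fin s, Fin (n i) × Fin (m i)) ℝ)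
    (hD : ∀ g, D g = Matrix.blockDiagonal'
      (fun i => Matrix.blockDiagonal (fun _ : Fin (m i) => Sig i g)))
    (Q : Matrix (Σ i : Fin s, Fin (n i) × Fin (m i)) (Σ i : Fin s, Fin (n i) × Fin (m i)) ℝ)
    (hQsymm : Q.IsSymm)
    (hQinv : ∀ g, (D g)ᵀ * Q * D g = Q) :
    ∃ M : ∀ i : Fin s, Matrix (Fin (m i)) (Fin (m i)) ℝ,
      (∀ i, (M i).IsSymm) ∧
      (∀ (i j : Fin s), i ≠ j →
        ∀ (t : Fin (n i)) (k : Fin (m i)) (u : Fin (n j)) (l : Fin (m j)),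
          Q ⟨i, (t, k)⟩ ⟨j, (u, l)⟩ = 0) ∧
      (∀ (i : Fin s) (t : Fin (n i)) (k : Fin (m i)) (u : Fin (n i)) (l : Fin (m i)),
        Q ⟨i, (t, k)⟩ ⟨i, (u, l)⟩ = if t = u then M i k l else 0) ∧
      (Q.PosSemidef ↔ ∀ i, (M i).PosSemidef) := by
  classical
  -- Orthogonality of `D g`
  have hDorth : ∀ g, (D g)ᵀ * D g = 1 := by
    intro g
    rw [hD g, Matrix.blockDiagonal'_transpose]
    rw [← Matrix.blockDiagonal'_mul (fun i => (Matrix.blockDiagonal fun _ : Fin (m i) => Sig i g)ᵀ)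
      (fun i => Matrix.blockDiagonal fun _ : Fin (m i) => Sig i g)]
    have : (fun i => (Matrix.blockDiagonal fun _ : Fin (m i) => Sig i g)ᵀ *
        (Matrix.blockDiagonal fun _ : Fin (m i) => Sig i g)) =
        fun i => (1 : Matrix (Fin (n i) × Fin (m i)) (Fin (n i) × Fin (m i)) ℝ) := by
      funext i
      rw [Matrix.blockDiagonal_transpose, ← Matrix.blockDiagonal_mul]
      simp only [hSigOrth]
      exact Matrix.blockDiagonal_one
    rw [this]
    exact Matrix.blockDiagonal'_one
  -- `D g` commutes with `Q`
  have hcomm : ∀ g, D g * Q = Q * D g := by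
    intro g
    have h1 : D g * (D g)ᵀ = 1 := mul_eq_one_comm.mp (hDorth g)
    conv_lhs => rw [← hQinv g]
    rw [← mul_assoc, ← mul_assoc, h1, one_mul]
  -- entries of `D g`
  have hDne : ∀ g (i j : Fin s), i ≠ j → ∀ p q, D g ⟨i, p⟩ ⟨j, q⟩ = 0 := by
    intro g i j hij p q
    rw [hD g]
    exact Matrix.blockDiagonal'_apply_ne _ _ _ hij
  have hDeq : ∀ g (i : Fin s) (t u : Fin (n i)) (k l : Fin (m i)),
      D g ⟨i, (t, k)⟩ ⟨i, (u, l)⟩ = if k = l then Sig i g t u else 0 := by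
    intro g i t u k l
    rw [hD g, Matrix.blockDiagonal'_apply_eq, Matrix.blockDiagonal_apply]
  -- the blocks of `Q` intertwine the representations
  have key : ∀ (i j : Fin s) (k : Fin (m i)) (l : Fin (m j)) (g : G),
      Sig i g * (Matrix.of fun t u => Q ⟨i, (t, k)⟩ ⟨j, (u, l)⟩)
        = (Matrix.of fun t u => Q ⟨i, (t, k)⟩ ⟨j, (u, l)⟩) * Sig j g := by
    intro i j k l g
    ext t u
    have h1 : (D g * Q) ⟨i, (t, k)⟩ ⟨j, (u, l)⟩
        = ∑ t', Sig i g t t' * Q ⟨i, (t', k)⟩ ⟨j, (u, l)⟩ := by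
      rw [Matrix.mul_apply, ← Finset.univ_sigma_univ, Finset.sum_sigma]
      rw [Finset.sum_eq_single i (fun i' _ hi' =>
        Finset.sum_eq_zero fun p _ => by rw [hDne g i i' hi'.symm]; ring)
        (fun h => absurd (Finset.mem_univ i) h)]
      rw [Fintype.sum_prod_type]
      refine Finset.sum_congr rfl fun t' _ => ?_
      rw [Finset.sum_eq_single k (fun k' _ hk' => by
          rw [hDeq, if_neg (Ne.symm hk')]; ring)
        (fun h => absurd (Finset.mem_univ k) h)]
      rw [hDeq, if_pos rfl]
    have h2 : (Q * D g) ⟨i, (t, k)⟩ ⟨j, (u, l)⟩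
        = ∑ u', Q ⟨i, (t, k)⟩ ⟨j, (u', l)⟩ * Sig j g u' u := by
      rw [Matrix.mul_apply, ← Finset.univ_sigma_univ, Finset.sum_sigma]
      rw [Finset.sum_eq_single j (fun j' _ hj' =>
        Finset.sum_eq_zero fun p _ => by rw [hDne g j' j hj']; ring)
        (fun h => absurd (Finset.mem_univ j) h)]
      rw [Fintype.sum_prod_type]
      refine Finset.sum_congr rfl fun u' _ => ?_
      rw [Finset.sum_eq_single l (fun l' _ hl' => by
          rw [hDeq, if_neg hl']; ring)
        (fun h => absurd (Finset.mem_univ l) h)]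
      rw [hDeq, if_pos rfl]
    calc (Sig i g * Matrix.of fun t u => Q ⟨i, (t, k)⟩ ⟨j, (u, l)⟩) t u
        = ∑ t', Sig i g t t' * Q ⟨i, (t', k)⟩ ⟨j, (u, l)⟩ := by
          rw [Matrix.mul_apply]; rfl
      _ = (D g * Q) ⟨i, (t, k)⟩ ⟨j, (u, l)⟩ := h1.symm
      _ = (Q * D g) ⟨i, (t, k)⟩ ⟨j, (u, l)⟩ := by rw [hcomm g]
      _ = ∑ u', Q ⟨i, (t, k)⟩ ⟨j, (u', l)⟩ * Sig j g u' u := h2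
      _ = ((Matrix.of fun t u => Q ⟨i, (t, k)⟩ ⟨j, (u, l)⟩) * Sig j g) t u := by
          rw [Matrix.mul_apply]; rfl
  -- off-diagonal blocks vanish
  have hoff : ∀ (i j : Fin s), i ≠ j →
      ∀ (t : Fin (n i)) (k : Fin (m i)) (u : Fin (n j)) (l : Fin (m j)),
        Q ⟨i, (t, k)⟩ ⟨j, (u, l)⟩ = 0 := by
    intro i j hij t k u l
    have h0 := hSchurOff i j hij _ (key i j k l)
    have := congrFun (congrFun h0 t) u
    simpa using this
  -- diagonal blocks are scalar
  have hdiag : ∀ (i : Fin s) (k l : Fin (m i)), ∃ c : ℝ,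
      ∀ t u, Q ⟨i, (t, k)⟩ ⟨i, (u, l)⟩ = if t = u then c else 0 := by
    intro i k l
    obtain ⟨c, hc⟩ := hSchurDiag i _ (key i i k l)
    refine ⟨c, fun t u => ?_⟩
    have := congrFun (congrFun hc t) u
    simpa [Matrix.one_apply, mul_ite] using this
  choose c hc using hdiag
  -- the multiplicity-space matrices
  set Mv : ∀ i : Fin s, Matrix (Fin (m i)) (Fin (m i)) ℝ := fun i =>
    if h : 0 < n i then Matrix.of (fun k l => Q ⟨i, (⟨0, h⟩, k)⟩ ⟨i, (⟨0, h⟩, l)⟩) else 0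
    with hMv
  have hMentry : ∀ (i : Fin s) (h : 0 < n i) (k l : Fin (m i)), Mv i k l = c i k l := by
    intro i h k l
    rw [hMv]
    simp only [dif_pos h]
    rw [Matrix.of_apply, hc i k l, if_pos rfl]
  have hblock : ∀ (i : Fin s) (t : Fin (n i)) (k : Fin (m i)) (u : Fin (n i)) (l : Fin (m i)),
      Q ⟨i, (t, k)⟩ ⟨i, (u, l)⟩ = if t = u then Mv i k l else 0 := by
    intro i t k u l
    rw [hc i k l t u, hMentry i t.pos k l]
  have hMsymm : ∀ i, (Mv i).IsSymm := by
    intro i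
    by_cases h : 0 < n i
    · refine Matrix.IsSymm.ext fun k l => ?_
      rw [hMv]
      simp only [dif_pos h, Matrix.of_apply]
      exact hQsymm.apply _ _
    · rw [hMv]; simp only [dif_neg h]; exact Matrix.isSymm_zero
  -- quadratic form identity
  have hform : ∀ x : (Σ i : Fin s, Fin (n i) × Fin (m i)) → ℝ,
      x ⬝ᵥ Q *ᵥ x = ∑ i, ∑ t : Fin (n i), ∑ k, ∑ l,
        x ⟨i, (t, k)⟩ * Mv i k l * x ⟨i, (t, l)⟩ := by
    intro x
    have h0 : x ⬝ᵥ Q *ᵥ x = ∑ p, ∑ q, x p * Q p q * x q := by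
      simp [dotProduct, Matrix.mulVec, Finset.mul_sum, mul_assoc]
    rw [h0, ← Finset.univ_sigma_univ, Finset.sum_sigma]
    refine Finset.sum_congr rfl fun i _ => ?_
    rw [Fintype.sum_prod_type]
    refine Finset.sum_congr rfl fun t _ => ?_
    refine Finset.sum_congr rfl fun k _ => ?_
    rw [Finset.sum_sigma]
    rw [Finset.sum_eq_single i (fun j _ hj =>
      Finset.sum_eq_zero fun p _ => by rw [hoff i j hj.symm t k p.1 p.2]; ring)
      (fun h => absurd (Finset.mem_univ i) h)]
    rw [Fintype.sum_prod_type]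
    rw [Finset.sum_eq_single t (fun u _ hu =>
      Finset.sum_eq_zero fun l _ => by rw [hblock, if_neg (Ne.symm hu)]; ring)
      (fun h => absurd (Finset.mem_univ t) h)]
    refine Finset.sum_congr rfl fun l _ => ?_
    rw [hblock, if_pos rfl]
  refine ⟨Mv, hMsymm, hoff, hblock, ?_⟩
  constructor
  · -- Q PSD → each Mv i PSD
    intro hQ i
    by_cases hpos : 0 < n i
    · refine Matrix.PosSemidef.of_dotProduct_mulVec_nonneg ?_ ?_
      · rw [Matrix.IsHermitian, Matrix.conjTranspose_eq_transpose_of_trivial]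
        exact hMsymm i
      · intro v
        set t0 : Fin (n i) := ⟨0, hpos⟩
        set y : ∀ j : Fin s, Fin (n j) × Fin (m j) → ℝ :=
          Function.update (fun j (_ : Fin (n j) × Fin (m j)) => (0 : ℝ)) i
            (fun q => if q.1 = t0 then v q.2 else 0) with hy
        set x : (Σ j : Fin s, Fin (n j) × Fin (m j)) → ℝ := fun p => y p.1 p.2 with hx
        have hyi : ∀ q : Fin (n i) × Fin (m i), y i q = if q.1 = t0 then v q.2 else 0 := by
          intro q; rw [hy, Function.update_self]
        have hyne : ∀ (j : Fin s), j ≠ i → ∀ q : Fin (n j) × Fin (m j), y j q = 0 := by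
          intro j hj q; rw [hy, Function.update_of_ne hj]
        have hval : x ⬝ᵥ Q *ᵥ x = ∑ k, ∑ l, v k * Mv i k l * v l := by
          rw [hform x]
          rw [Finset.sum_eq_single i (fun j _ hj => by
            apply Finset.sum_eq_zero; intro t _
            apply Finset.sum_eq_zero; intro k _
            apply Finset.sum_eq_zero; intro l _
            have : x ⟨j, (t, k)⟩ = 0 := hyne j hj (t, k)
            rw [this]; ring)
            (fun h => absurd (Finset.mem_univ i) h)]
          rw [Finset.sum_eq_single t0 (fun u _ hu => by
            apply Finset.sum_eq_zero; intro k _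
            apply Finset.sum_eq_zero; intro l _
            have : x ⟨i, (u, k)⟩ = 0 := by
              rw [hx]; dsimp only; rw [hyi (u, k), if_neg hu]
            rw [this]; ring)
            (fun h => absurd (Finset.mem_univ t0) h)]
          refine Finset.sum_congr rfl fun k _ => Finset.sum_congr rfl fun l _ => ?_
          have e1 : x ⟨i, (t0, k)⟩ = v k := by
            rw [hx]; dsimp only; rw [hyi (t0, k), if_pos rfl]
          have e2 : x ⟨i, (t0, l)⟩ = v l := by
            rw [hx]; dsimp only; rw [hyi (t0, l), if_pos rfl]
          rw [e1, e2]
        have hnn := hQ.dotProduct_mulVec_nonneg x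
        have hsx : star x = x := by funext p; exact star_trivial _
        rw [hsx, hval] at hnn
        have hdot : star v ⬝ᵥ Mv i *ᵥ v = ∑ k, ∑ l, v k * Mv i k l * v l := by
          have hsv : star v = v := by funext p; exact star_trivial _
          rw [hsv]
          simp [dotProduct, Matrix.mulVec, Finset.mul_sum, mul_assoc]
        rw [hdot]
        exact hnn
    · have : Mv i = 0 := by rw [hMv]; simp only [dif_neg hpos]
      rw [this]
      exact Matrix.PosSemidef.zero
  · -- each Mv i PSD → Q PSD
    intro hM
    refine Matrix.PosSemidef.of_dotProduct_mulVec_nonneg ?_ ?_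
    · rw [Matrix.IsHermitian, Matrix.conjTranspose_eq_transpose_of_trivial]
      exact hQsymm
    · intro x
      have hsx : star x = x := by funext p; exact star_trivial _
      rw [hsx, hform x]
      refine Finset.sum_nonneg fun i _ => Finset.sum_nonneg fun t _ => ?_
      have hdot : star (fun k => x ⟨i, (t, k)⟩) ⬝ᵥ Mv i *ᵥ (fun k => x ⟨i, (t, k)⟩)
          = ∑ k, ∑ l, x ⟨i, (t, k)⟩ * Mv i k l * x ⟨i, (t, l)⟩ := by
        have hsv : star (fun k => x ⟨i, (t, k)⟩) = fun k => x ⟨i, (t, k)⟩ := by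
          funext p; exact star_trivial _
        rw [hsv]
        simp [dotProduct, Matrix.mulVec, Finset.mul_sum, mul_assoc]
      calc (0 : ℝ) ≤ _ := (hM i).dotProduct_mulVec_nonneg (fun k => x ⟨i, (t, k)⟩)
        _ = _ := hdot
end

section
/- Let a, b, c, d ∈ ℝ and let f = a·Σᵢxᵢ⁴ + b·Σ_{i≠j}xᵢ³xⱼ + c·Σ_{i<j}xᵢ²xⱼ² + d·(x₁²x₂x₃ + x₂²x₁x₃ + x₃²x₁x₂) ∈ ℝ[x₁,x₂,x₃] be a symmetric ternary quartic. Then f is a sum of squares of real polynomials if and only if there exist u, v ∈ ℝ such that both 2×2 matrices [[a+2u, b+v],[b+v, c+d−2u−2v]] and [[a−u, b/2−v],[b/2−v, c−d/2−2u+v]] are positive semidefinite. -/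
open MvPolynomial Matrix

lemma psd2 (p q r : ℝ) :
    (!![p, q; q, r]).PosSemidef ↔ 0 ≤ p ∧ 0 ≤ r ∧ q ^ 2 ≤ p * r := by
  constructor
  · intro h
    have h2 := (Matrix.posSemidef_iff_dotProduct_mulVec.mp h).2
    have e1 := h2 ![1, 0]
    have e2 := h2 ![0, 1]
    simp [dotProduct, Matrix.mulVec, Fin.sum_univ_two] at e1 e2
    have e3 : ∀ t : ℝ, 0 ≤ p * (t * t) + 2 * q * t + r := by
      intro t
      have := h2 ![t, 1]
      simp [dotProduct, Matrix.mulVec, Fin.sum_univ_two] at this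
      nlinarith [this]
    have hd : discrim p (2*q) r ≤ 0 := discrim_le_zero e3
    rw [discrim] at hd
    refine ⟨e1, e2, by nlinarith⟩
  · rintro ⟨hp, hr, hq⟩
    refine Matrix.posSemidef_iff_dotProduct_mulVec.mpr ⟨?_, ?_⟩
    · ext i j
      fin_cases i <;> fin_cases j <;> simp [Matrix.conjTranspose_apply]
    · intro x
      have hx : (star x) ⬝ᵥ (!![p, q; q, r]).mulVec x
          = p * x 0 ^ 2 + 2 * q * (x 0 * x 1) + r * x 1 ^ 2 := by
        simp [dotProduct, Matrix.mulVec, Fin.sum_univ_two]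
        ring
      rw [hx]
      rcases eq_or_lt_of_le hp with hp0 | hp0
      · have hq0 : q = 0 := by nlinarith
        subst hq0
        nlinarith [sq_nonneg (x 1)]
      · nlinarith [sq_nonneg (p * x 0 + q * x 1), mul_nonneg (sub_nonneg.2 hq) (sq_nonneg (x 1))]

lemma psd_of_sums {ι : Type*} [Fintype ι] (A B : ι → ℝ) (t p q r : ℝ) (ht : 0 < t)
    (hp : t * p = ∑ i, A i ^ 2) (hq : t * q = ∑ i, A i * B i) (hr : t * r = ∑ i, B i ^ 2) :
    (!![p, q; q, r]).PosSemidef := by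
  rw [psd2]
  have hA : (0:ℝ) ≤ ∑ i, A i ^ 2 := Finset.sum_nonneg fun i _ => sq_nonneg _
  have hB : (0:ℝ) ≤ ∑ i, B i ^ 2 := Finset.sum_nonneg fun i _ => sq_nonneg _
  have cs := Finset.sum_mul_sq_le_sq_mul_sq Finset.univ A B
  refine ⟨nonneg_of_mul_nonneg_right (hp ▸ hA) ht, nonneg_of_mul_nonneg_right (hr ▸ hB) ht, ?_⟩
  have h2 : (t * q) ^ 2 ≤ (t * p) * (t * r) := by rw [hp, hq, hr]; exact cs
  nlinarith [mul_pos ht ht]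

lemma sum6 {k : ℕ} (c : Fin k → Fin 6 → ℝ) (w0 w1 w2 w3 w4 w5 : ℝ) :
    ∑ i, (w0 * c i 0 + w1 * c i 1 + w2 * c i 2 + w3 * c i 3 + w4 * c i 4 + w5 * c i 5) ^ 2
    = w0^2 * (∑ i, c i 0 * c i 0) + w1^2 * (∑ i, c i 1 * c i 1) + w2^2 * (∑ i, c i 2 * c i 2)
    + w3^2 * (∑ i, c i 3 * c i 3) + w4^2 * (∑ i, c i 4 * c i 4) + w5^2 * (∑ i, c i 5 * c i 5)
    + 2*w0*w1 * (∑ i, c i 0 * c i 1) + 2*w0*w2 * (∑ i, c i 0 * c i 2)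
    + 2*w0*w3 * (∑ i, c i 0 * c i 3) + 2*w0*w4 * (∑ i, c i 0 * c i 4)
    + 2*w0*w5 * (∑ i, c i 0 * c i 5) + 2*w1*w2 * (∑ i, c i 1 * c i 2)
    + 2*w1*w3 * (∑ i, c i 1 * c i 3) + 2*w1*w4 * (∑ i, c i 1 * c i 4)
    + 2*w1*w5 * (∑ i, c i 1 * c i 5) + 2*w2*w3 * (∑ i, c i 2 * c i 3)
    + 2*w2*w4 * (∑ i, c i 2 * c i 4) + 2*w2*w5 * (∑ i, c i 2 * c i 5)
    + 2*w3*w4 * (∑ i, c i 3 * c i 4) + 2*w3*w5 * (∑ i, c i 3 * c i 5)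
    + 2*w4*w5 * (∑ i, c i 4 * c i 5) := by
  simp only [Finset.mul_sum, ← Finset.sum_add_distrib]
  exact Finset.sum_congr rfl fun i _ => by ring

lemma eval_homog_smul {n : ℕ} {φ : MvPolynomial (Fin 3) ℝ} (hφ : φ.IsHomogeneous n)
    (t : ℝ) (x : Fin 3 → ℝ) :
    eval (fun j => t * x j) φ = t ^ n * eval x φ := by
  rw [eval_eq', eval_eq', Finset.mul_sum]
  refine Finset.sum_congr rfl fun d hd => ?_
  have hdeg : ∑ i : Fin 3, d i = n := by
    have h1 : d.degree = n := by
      rw [Finsupp.degree_eq_weight_one]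
      exact hφ (mem_support_iff.1 hd)
    rw [← h1, Finsupp.degree]
    exact (Finset.sum_subset (Finset.subset_univ _)
      (fun i _ hi => Finsupp.notMem_support_iff.1 hi)).symm
  calc coeff d φ * ∏ i, (t * x i) ^ d i
      = coeff d φ * ((∏ i, t ^ d i) * ∏ i, x i ^ d i) := by
        rw [← Finset.prod_mul_distrib]; simp_rw [mul_pow]
    _ = t ^ n * (coeff d φ * ∏ i, x i ^ d i) := by
        rw [Finset.prod_pow_eq_pow_sum, hdeg]; ring

noncomputable def s6 : Fin 6 → (Fin 3 →₀ ℕ)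
  | 0 => Finsupp.single 0 2
  | 1 => Finsupp.single 1 2
  | 2 => Finsupp.single 2 2
  | 3 => Finsupp.single 0 1 + Finsupp.single 1 1
  | 4 => Finsupp.single 0 1 + Finsupp.single 2 1
  | 5 => Finsupp.single 1 1 + Finsupp.single 2 1

def s6v : Fin 6 → Fin 3 → ℕ
  | 0, 0 => 2 | 0, 1 => 0 | 0, 2 => 0
  | 1, 0 => 0 | 1, 1 => 2 | 1, 2 => 0
  | 2, 0 => 0 | 2, 1 => 0 | 2, 2 => 2
  | 3, 0 => 1 | 3, 1 => 1 | 3, 2 => 0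
  | 4, 0 => 1 | 4, 1 => 0 | 4, 2 => 1
  | 5, 0 => 0 | 5, 1 => 1 | 5, 2 => 1

lemma s6_apply (j : Fin 6) (i : Fin 3) : s6 j i = s6v j i := by
  fin_cases j <;> fin_cases i <;> simp [s6, s6v, Finsupp.single_apply]

lemma s6_inj : Function.Injective s6 := by
  intro j1 j2 h
  have h0 := DFunLike.congr_fun h 0
  have h1 := DFunLike.congr_fun h 1
  have h2 := DFunLike.congr_fun h 2
  rw [s6_apply, s6_apply] at h0 h1 h2
  fin_cases j1 <;> fin_cases j2 <;>
    first
      | rfl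
      | (exfalso; revert h0 h1 h2; decide)

lemma deg2_classify (d : Fin 3 →₀ ℕ) (hd : d.degree = 2) : ∃ j : Fin 6, d = s6 j := by
  have hsum : d 0 + d 1 + d 2 = 2 := by
    have h2 : ∑ i : Fin 3, d i = 2 := by
      rw [← hd, Finsupp.degree]
      exact (Finset.sum_subset (Finset.subset_univ _)
        (fun i _ hi => Finsupp.notMem_support_iff.1 hi)).symm
    simpa [Fin.sum_univ_three] using h2
  have key : ∀ j : Fin 6, d 0 = s6v j 0 → d 1 = s6v j 1 → d 2 = s6v j 2 → ∃ j' : Fin 6, d = s6 j' := by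
    intro j e0 e1 e2
    exact ⟨j, Finsupp.ext fun i => by rw [s6_apply]; fin_cases i <;> assumption⟩
  have hcases : (d 0 = 2 ∧ d 1 = 0 ∧ d 2 = 0) ∨ (d 0 = 0 ∧ d 1 = 2 ∧ d 2 = 0) ∨
      (d 0 = 0 ∧ d 1 = 0 ∧ d 2 = 2) ∨ (d 0 = 1 ∧ d 1 = 1 ∧ d 2 = 0) ∨
      (d 0 = 1 ∧ d 1 = 0 ∧ d 2 = 1) ∨ (d 0 = 0 ∧ d 1 = 1 ∧ d 2 = 1) := by omega
  rcases hcases with h | h | h | h | h | h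
  · exact key 0 h.1 h.2.1 h.2.2
  · exact key 1 h.1 h.2.1 h.2.2
  · exact key 2 h.1 h.2.1 h.2.2
  · exact key 3 h.1 h.2.1 h.2.2
  · exact key 4 h.1 h.2.1 h.2.2
  · exact key 5 h.1 h.2.1 h.2.2

lemma quad_form {p : MvPolynomial (Fin 3) ℝ} (hp : p.IsHomogeneous 2) :
    ∃ c : Fin 6 → ℝ, ∀ x : Fin 3 → ℝ,
      eval x p = c 0 * x 0 ^ 2 + c 1 * x 1 ^ 2 + c 2 * x 2 ^ 2
        + c 3 * (x 0 * x 1) + c 4 * (x 0 * x 2) + c 5 * (x 1 * x 2) := by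
  refine ⟨fun j => coeff (s6 j) p, fun x => ?_⟩
  rw [eval_eq']
  have hsub : p.support ⊆ Finset.image s6 Finset.univ := by
    intro d hd
    have hdeg : d.degree = 2 := by
      rw [Finsupp.degree_eq_weight_one]
      exact hp (mem_support_iff.1 hd)
    obtain ⟨j, rfl⟩ := deg2_classify d hdeg
    exact Finset.mem_image_of_mem _ (Finset.mem_univ j)
  rw [Finset.sum_subset hsub (fun d _ hd => by
    rw [notMem_support_iff.1 hd, zero_mul])]
  rw [Finset.sum_image (fun j _ j' _ h => s6_inj h)]
  have hprod : ∀ j : Fin 6, (∏ i : Fin 3, x i ^ (s6 j) i) =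
      x 0 ^ s6v j 0 * x 1 ^ s6v j 1 * x 2 ^ s6v j 2 := by
    intro j
    rw [Fin.prod_univ_three, s6_apply, s6_apply, s6_apply]
  simp_rw [hprod]
  rw [Fin.sum_univ_six]
  norm_num [s6v]
  try ring

lemma homogenize {k : ℕ} (q : Fin k → MvPolynomial (Fin 3) ℝ)
    (F : MvPolynomial (Fin 3) ℝ)
    (hsc : ∀ (t : ℝ) (x : Fin 3 → ℝ), eval (fun j => t * x j) F = t ^ 4 * eval x F)
    (h : F = ∑ i, q i ^ 2) :
    F = ∑ i, (homogeneousComponent 2 (q i)) ^ 2 := by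
  classical
  set N := Finset.univ.sup (fun i : Fin k => (q i).totalDegree) with hN
  set M := N + 3 with hM
  have hNi : ∀ i, (q i).totalDegree ≤ N := fun i => Finset.le_sup (f := fun i => (q i).totalDegree) (Finset.mem_univ i)
  have hq_sum : ∀ i, ∑ d ∈ Finset.range M, homogeneousComponent d (q i) = q i := by
    intro i
    have h1 := sum_homogeneousComponent (q i)
    have hsub : Finset.range ((q i).totalDegree + 1) ⊆ Finset.range M :=
      Finset.range_subset_range.2 (by have := hNi i; omega)
    conv_rhs => rw [← h1]
    refine (Finset.sum_subset hsub
      (fun d hd hds => homogeneousComponent_eq_zero d (q i) ?_)).symm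
    simp only [Finset.mem_range] at hd hds
    omega
  have heval : ∀ (i : Fin k) (t : ℝ) (x : Fin 3 → ℝ), eval (fun j => t * x j) (q i)
      = ∑ d ∈ Finset.range M, t ^ d * eval x (homogeneousComponent d (q i)) := by
    intro i t x
    conv_lhs => rw [← hq_sum i]
    rw [map_sum]
    exact Finset.sum_congr rfl fun d _ =>
      eval_homog_smul (homogeneousComponent_isHomogeneous d (q i)) t x
  -- the key coefficient identity
  have hkey : ∀ (x : Fin 3 → ℝ) (m : ℕ),
      (if m = 4 then eval x F else 0 : ℝ)
      = ∑ i, ∑ e1 ∈ Finset.range (m+1),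
          eval x (homogeneousComponent e1 (q i)) * eval x (homogeneousComponent (m - e1) (q i)) := by
    intro x m
    set gg : Fin k → Polynomial ℝ :=
      fun i => ∑ d ∈ Finset.range M, Polynomial.C (eval x (homogeneousComponent d (q i))) * Polynomial.X ^ d with hgg
    have hgc : ∀ (i : Fin k) (m' : ℕ), (gg i).coeff m' = eval x (homogeneousComponent m' (q i)) := by
      intro i m'
      rw [hgg]
      rw [Polynomial.finset_sum_coeff]
      simp only [Polynomial.coeff_C_mul, Polynomial.coeff_X_pow, mul_ite, mul_one, mul_zero]
      rw [Finset.sum_ite_eq (Finset.range M) m'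
        (fun d => eval x (homogeneousComponent d (q i)))]
      by_cases hm : m' ∈ Finset.range M
      · rw [if_pos hm]
      · rw [if_neg hm]
        rw [homogeneousComponent_eq_zero m' (q i) (by
          simp only [Finset.mem_range] at hm
          have := hNi i; omega), map_zero]
    have hgeval : ∀ (i : Fin k) (t : ℝ), (gg i).eval t = eval (fun j => t * x j) (q i) := by
      intro i t
      rw [hgg, heval i t x, Polynomial.eval_finset_sum]
      exact Finset.sum_congr rfl fun d _ => by
        rw [Polynomial.eval_mul, Polynomial.eval_C, Polynomial.eval_pow, Polynomial.eval_X]; ring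
    have hP : (∑ i, gg i ^ 2) = Polynomial.C (eval x F) * Polynomial.X ^ 4 := by
      apply Polynomial.funext
      intro t
      rw [Polynomial.eval_finset_sum]
      simp only [Polynomial.eval_pow, Polynomial.eval_mul, Polynomial.eval_C, Polynomial.eval_X]
      simp_rw [hgeval]
      have : ∑ i, (eval (fun j => t * x j) (q i)) ^ 2
          = eval (fun j => t * x j) (∑ i, q i ^ 2) := by
        rw [map_sum]
        exact Finset.sum_congr rfl fun i _ => (map_pow _ _ _).symm
      rw [this, ← h, hsc t x]
      ring
    have := congrArg (fun p => Polynomial.coeff p m) hP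
    rw [Polynomial.finset_sum_coeff] at this
    have hrhs : ∀ i : Fin k, (gg i ^ 2).coeff m
        = ∑ e1 ∈ Finset.range (m+1),
            eval x (homogeneousComponent e1 (q i)) * eval x (homogeneousComponent (m - e1) (q i)) := by
      intro i
      rw [sq, Polynomial.coeff_mul, Finset.Nat.sum_antidiagonal_eq_sum_range_succ_mk]
      exact Finset.sum_congr rfl fun e1 _ => by rw [hgc, hgc]
    simp_rw [hrhs] at this
    rw [this, Polynomial.coeff_C_mul, Polynomial.coeff_X_pow]
    by_cases hm : m = 4
    · rw [if_pos hm, if_pos hm, mul_one]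
    · rw [if_neg hm, if_neg hm, mul_zero]
  -- vanishing of all components other than 2
  have hvan_zero_of_sq : ∀ (d : ℕ) (i : Fin k),
      (∀ x : Fin 3 → ℝ, ∑ i', (eval x (homogeneousComponent d (q i'))) ^ 2 = 0) →
      homogeneousComponent d (q i) = 0 := by
    intro d i hx
    apply MvPolynomial.funext
    intro x
    rw [map_zero]
    have h0 := hx x
    have := Finset.sum_eq_zero_iff_of_nonneg (fun i' _ => sq_nonneg
      (eval x (homogeneousComponent d (q i')))) |>.1 h0 i (Finset.mem_univ i)
    exact pow_eq_zero_iff (two_ne_zero) |>.1 this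
  have hvan_big : ∀ (j d : ℕ) (i : Fin k), N + 1 ≤ d + j → 2 < d →
      homogeneousComponent d (q i) = 0 := by
    intro j
    induction j with
    | zero =>
      intro d i hd _
      exact homogeneousComponent_eq_zero _ _ (by have := hNi i; omega)
    | succ j ih =>
      intro d i hd h2
      by_cases hdc : N + 1 ≤ d + j
      · exact ih d i hdc h2
      apply hvan_zero_of_sq d i
      intro x
      have hk := hkey x (2*d)
      rw [if_neg (by omega)] at hk
      have hinner : ∀ i' : Fin k, (∑ e1 ∈ Finset.range (2*d+1),
          eval x (homogeneousComponent e1 (q i')) * eval x (homogeneousComponent (2*d - e1) (q i')))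
          = (eval x (homogeneousComponent d (q i'))) ^ 2 := by
        intro i'
        rw [Finset.sum_eq_single d]
        · rw [show 2*d - d = d by omega, sq]
        · intro e1 _ hne
          rcases Nat.lt_or_ge e1 d with hlt | hge
          · rw [ih (2*d - e1) i' (by omega) (by omega), map_zero, mul_zero]
          · have : d < e1 := by omega
            rw [ih e1 i' (by omega) (by omega), map_zero, zero_mul]
        · intro hdm
          exact absurd (Finset.mem_range.2 (by omega)) hdm
      simp_rw [hinner] at hk
      exact hk.symm
  have hvan0 : ∀ i, homogeneousComponent 0 (q i) = 0 := by
    intro i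
    apply hvan_zero_of_sq 0 i
    intro x
    have hk := hkey x 0
    rw [if_neg (by omega)] at hk
    simp only [zero_add, Finset.range_one, Finset.sum_singleton, Nat.sub_zero] at hk
    rw [show (0:ℝ) = ∑ i' : Fin k, (eval x) ((homogeneousComponent 0) (q i')) *
      (eval x) ((homogeneousComponent 0) (q i')) from hk]
    exact Finset.sum_congr rfl fun i' _ => pow_two _
  have hvan1 : ∀ i, homogeneousComponent 1 (q i) = 0 := by
    intro i
    apply hvan_zero_of_sq 1 i
    intro x
    have hk := hkey x 2
    rw [if_neg (by omega)] at hk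
    have hinner : ∀ i' : Fin k, (∑ e1 ∈ Finset.range 3,
        eval x (homogeneousComponent e1 (q i')) * eval x (homogeneousComponent (2 - e1) (q i')))
        = (eval x (homogeneousComponent 1 (q i'))) ^ 2 := by
      intro i'
      rw [Finset.sum_range_succ, Finset.sum_range_succ, Finset.sum_range_one]
      rw [show (2:ℕ) - 0 = 2 from rfl, show (2:ℕ) - 1 = 1 from rfl,
        show (2:ℕ) - 2 = 0 from rfl]
      rw [hvan0 i', map_zero, zero_mul, mul_zero, zero_add, add_zero, pow_two]
    simp_rw [hinner] at hk
    exact hk.symm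
  have hq2 : ∀ i, q i = homogeneousComponent 2 (q i) := by
    intro i
    conv_lhs => rw [← hq_sum i]
    rw [Finset.sum_eq_single_of_mem 2 (Finset.mem_range.2 (by omega))]
    intro d _ hne
    rcases Nat.lt_or_ge d 2 with hlt | hge
    · interval_cases d
      · exact hvan0 i
      · exact hvan1 i
    · have : 2 < d := by omega
      exact hvan_big (N+1) d i (by omega) this
  rw [h]
  exact Finset.sum_congr rfl fun i _ => by rw [← hq2 i]

lemma sqrt_decomp (p q r : ℝ) (hp : 0 ≤ p) (hr : 0 ≤ r) (hq : q ^ 2 ≤ p * r) :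
    ∃ α β δ : ℝ, p = α ^ 2 ∧ q = α * β ∧ r = β ^ 2 + δ ^ 2 := by
  rcases eq_or_lt_of_le hp with hp0 | hp0
  · have hq0 : q = 0 := by nlinarith
    exact ⟨0, 0, Real.sqrt r, by simp [← hp0], by simp [hq0],
      by rw [Real.sq_sqrt hr]; ring⟩
  · refine ⟨Real.sqrt p, q / Real.sqrt p, Real.sqrt (r - q ^ 2 / p), ?_, ?_, ?_⟩
    · rw [Real.sq_sqrt hp]
    · rw [mul_div_assoc']
      rw [mul_div_cancel_left₀ _ (by positivity : Real.sqrt p ≠ 0)]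
    · have hps : Real.sqrt p ^ 2 = p := Real.sq_sqrt hp
      have h1 : (q / Real.sqrt p) ^ 2 = q ^ 2 / p := by
        rw [div_pow, hps]
      rw [h1, Real.sq_sqrt (by
        rw [sub_nonneg, div_le_iff₀ hp0]
        nlinarith)]
      ring

noncomputable def bigF (a b c d : ℝ) : MvPolynomial (Fin 3) ℝ :=
  C a * ∑ i : Fin 3, X i ^ 4 +
    C b * ∑ i : Fin 3, ∑ j ∈ Finset.univ.erase i, X i ^ 3 * X j +
    C c * ∑ i : Fin 3, ∑ j ∈ Finset.Ioi i, X i ^ 2 * X j ^ 2 +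
    C d * (X 0 ^ 2 * X 1 * X 2 + X 1 ^ 2 * X 0 * X 2 + X 2 ^ 2 * X 0 * X 1)

lemma erase0 : (Finset.univ.erase (0 : Fin 3)) = {1, 2} := by decide
lemma erase1 : (Finset.univ.erase (1 : Fin 3)) = {0, 2} := by decide
lemma erase2 : (Finset.univ.erase (2 : Fin 3)) = {0, 1} := by decide
lemma ioi0 : (Finset.Ioi (0 : Fin 3)) = {1, 2} := by decide
lemma ioi1 : (Finset.Ioi (1 : Fin 3)) = {2} := by decide
lemma ioi2 : (Finset.Ioi (2 : Fin 3)) = (∅ : Finset (Fin 3)) := by decide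

lemma fexp (a b c d : ℝ) (x : Fin 3 → ℝ) :
    eval x (bigF a b c d) =
      a * (x 0 ^ 4 + x 1 ^ 4 + x 2 ^ 4)
      + b * (x 0 ^ 3 * x 1 + x 0 ^ 3 * x 2 + x 1 ^ 3 * x 0 + x 1 ^ 3 * x 2
          + x 2 ^ 3 * x 0 + x 2 ^ 3 * x 1)
      + c * (x 0 ^ 2 * x 1 ^ 2 + x 0 ^ 2 * x 2 ^ 2 + x 1 ^ 2 * x 2 ^ 2)
      + d * (x 0 ^ 2 * x 1 * x 2 + x 1 ^ 2 * x 0 * x 2 + x 2 ^ 2 * x 0 * x 1) := by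
  simp only [bigF, Fin.sum_univ_three, erase0, erase1, erase2, ioi0, ioi1, ioi2]
  simp only [Finset.sum_pair (by decide : (1:Fin 3) ≠ 2),
    Finset.sum_pair (by decide : (0:Fin 3) ≠ 2), Finset.sum_pair (by decide : (0:Fin 3) ≠ 1),
    Finset.sum_singleton, Finset.sum_empty]
  simp only [map_add, _root_.map_mul, map_pow, eval_C, eval_X, add_zero]
  ring

def pt (r0 r1 r2 : ℝ) : Fin 3 → ℝ
  | 0 => r0
  | 1 => r1
  | 2 => r2

@[simp] lemma pt_zero (r0 r1 r2 : ℝ) : pt r0 r1 r2 0 = r0 := rfl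
@[simp] lemma pt_one (r0 r1 r2 : ℝ) : pt r0 r1 r2 1 = r1 := rfl
@[simp] lemma pt_two (r0 r1 r2 : ℝ) : pt r0 r1 r2 2 = r2 := rfl

theorem stmt17_forward (a b c d : ℝ) (k : ℕ) (q : Fin k → MvPolynomial (Fin 3) ℝ)
    (hF : bigF a b c d = ∑ i, q i ^ 2) :
    (∃ u v : ℝ,
      (!![a + 2 * u, b + v; b + v, c + d - 2 * u - 2 * v]).PosSemidef ∧
      (!![a - u, b / 2 - v; b / 2 - v, c - d / 2 - 2 * u + v]).PosSemidef) := by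
  have hsc : ∀ (t : ℝ) (x : Fin 3 → ℝ),
      eval (fun j => t * x j) (bigF a b c d) = t ^ 4 * eval x (bigF a b c d) := by
    intro t x
    have h1 := fexp a b c d (fun j => t * x j)
    rw [h1, fexp]; ring
  have hF2 := homogenize q (bigF a b c d) hsc hF
  choose cc hcc using fun i => quad_form (homogeneousComponent_isHomogeneous 2 (q i))
  have main3 : ∀ x : Fin 3 → ℝ,
      a * (x 0 ^ 4 + x 1 ^ 4 + x 2 ^ 4)
      + b * (x 0 ^ 3 * x 1 + x 0 ^ 3 * x 2 + x 1 ^ 3 * x 0 + x 1 ^ 3 * x 2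
          + x 2 ^ 3 * x 0 + x 2 ^ 3 * x 1)
      + c * (x 0 ^ 2 * x 1 ^ 2 + x 0 ^ 2 * x 2 ^ 2 + x 1 ^ 2 * x 2 ^ 2)
      + d * (x 0 ^ 2 * x 1 * x 2 + x 1 ^ 2 * x 0 * x 2 + x 2 ^ 2 * x 0 * x 1)
      = (x 0 ^ 2) * (x 0 ^ 2) * (∑ i, cc i 0 * cc i 0)
          + 2 * (x 0 ^ 2) * (x 1 ^ 2) * (∑ i, cc i 0 * cc i 1)
          + 2 * (x 0 ^ 2) * (x 2 ^ 2) * (∑ i, cc i 0 * cc i 2)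
          + 2 * (x 0 ^ 2) * (x 0 * x 1) * (∑ i, cc i 0 * cc i 3)
          + 2 * (x 0 ^ 2) * (x 0 * x 2) * (∑ i, cc i 0 * cc i 4)
          + 2 * (x 0 ^ 2) * (x 1 * x 2) * (∑ i, cc i 0 * cc i 5)
          + (x 1 ^ 2) * (x 1 ^ 2) * (∑ i, cc i 1 * cc i 1)
          + 2 * (x 1 ^ 2) * (x 2 ^ 2) * (∑ i, cc i 1 * cc i 2)
          + 2 * (x 1 ^ 2) * (x 0 * x 1) * (∑ i, cc i 1 * cc i 3)
          + 2 * (x 1 ^ 2) * (x 0 * x 2) * (∑ i, cc i 1 * cc i 4)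
          + 2 * (x 1 ^ 2) * (x 1 * x 2) * (∑ i, cc i 1 * cc i 5)
          + (x 2 ^ 2) * (x 2 ^ 2) * (∑ i, cc i 2 * cc i 2)
          + 2 * (x 2 ^ 2) * (x 0 * x 1) * (∑ i, cc i 2 * cc i 3)
          + 2 * (x 2 ^ 2) * (x 0 * x 2) * (∑ i, cc i 2 * cc i 4)
          + 2 * (x 2 ^ 2) * (x 1 * x 2) * (∑ i, cc i 2 * cc i 5)
          + (x 0 * x 1) * (x 0 * x 1) * (∑ i, cc i 3 * cc i 3)
          + 2 * (x 0 * x 1) * (x 0 * x 2) * (∑ i, cc i 3 * cc i 4)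
          + 2 * (x 0 * x 1) * (x 1 * x 2) * (∑ i, cc i 3 * cc i 5)
          + (x 0 * x 2) * (x 0 * x 2) * (∑ i, cc i 4 * cc i 4)
          + 2 * (x 0 * x 2) * (x 1 * x 2) * (∑ i, cc i 4 * cc i 5)
          + (x 1 * x 2) * (x 1 * x 2) * (∑ i, cc i 5 * cc i 5) := by
    intro x
    have h1 : eval x (bigF a b c d) = ∑ i, (eval x (homogeneousComponent 2 (q i))) ^ 2 := by
      rw [hF2, map_sum]
      exact Finset.sum_congr rfl fun i _ => map_pow _ _ _
    rw [fexp] at h1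
    simp_rw [hcc] at h1
    rw [h1]
    simp only [Finset.mul_sum, ← Finset.sum_add_distrib]
    exact Finset.sum_congr rfl fun i _ => by ring
  have E1 := main3 (pt 1 0 0); have E2 := main3 (pt 0 1 0); have E3 := main3 (pt 0 0 1)
  have E4 := main3 (pt 0 1 1); have E5 := main3 (pt 1 0 1); have E6 := main3 (pt 1 1 0)
  have E7 := main3 (pt (-1) 0 1); have E8 := main3 (pt (-1) 1 0); have E9 := main3 (pt 0 (-1) 1)
  have E10 := main3 (pt 1 1 1)
  simp only [pt_zero, pt_one, pt_two] at E1 E2 E3 E4 E5 E6 E7 E8 E9 E10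
  have R1 : (∑ i, cc i 0 * cc i 0) + (∑ i, cc i 1 * cc i 1) + (∑ i, cc i 2 * cc i 2)
      = 3 * a := by linear_combination (-1) * E1 + (-1) * E2 + (-1) * E3
  have R2 : (∑ i, cc i 0 * cc i 3) + (∑ i, cc i 0 * cc i 4) + (∑ i, cc i 1 * cc i 3)
      + (∑ i, cc i 1 * cc i 5) + (∑ i, cc i 2 * cc i 4) + (∑ i, cc i 2 * cc i 5)
      = 3 * b := by
    linear_combination (-1/4) * E4 + (-1/4) * E5 + (-1/4) * E6
      + (1/4) * E7 + (1/4) * E8 + (1/4) * E9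
  have R3 : 2 * ((∑ i, cc i 0 * cc i 1) + (∑ i, cc i 0 * cc i 2) + (∑ i, cc i 1 * cc i 2))
      + ((∑ i, cc i 3 * cc i 3) + (∑ i, cc i 4 * cc i 4) + (∑ i, cc i 5 * cc i 5))
      = 3 * c := by
    linear_combination 2 * E1 + 2 * E2 + 2 * E3
      + (-1/2) * E4 + (-1/2) * E5 + (-1/2) * E6 + (-1/2) * E7 + (-1/2) * E8 + (-1/2) * E9
  have R4 : 2 * ((∑ i, cc i 0 * cc i 5) + (∑ i, cc i 1 * cc i 4) + (∑ i, cc i 2 * cc i 3))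
      + 2 * ((∑ i, cc i 3 * cc i 4) + (∑ i, cc i 3 * cc i 5) + (∑ i, cc i 4 * cc i 5))
      = 3 * d := by
    linear_combination (-1) * E1 + (-1) * E2 + (-1) * E3 + E4 + E5 + E6 + (-1) * E10
  refine ⟨((∑ i, cc i 0 * cc i 1) + (∑ i, cc i 0 * cc i 2) + (∑ i, cc i 1 * cc i 2)) / 3,
    ((∑ i, cc i 0 * cc i 5) + (∑ i, cc i 1 * cc i 4) + (∑ i, cc i 2 * cc i 3)) / 3, ?_, ?_⟩
  · refine psd_of_sums (fun i => cc i 0 + cc i 1 + cc i 2) (fun i => cc i 3 + cc i 4 + cc i 5)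
      3 _ _ _ (by norm_num) ?_ ?_ ?_
    · have ex : ∑ i, (cc i 0 + cc i 1 + cc i 2) ^ 2
          = (∑ i, cc i 0 * cc i 0) + (∑ i, cc i 1 * cc i 1) + (∑ i, cc i 2 * cc i 2)
          + 2 * (∑ i, cc i 0 * cc i 1) + 2 * (∑ i, cc i 0 * cc i 2) + 2 * (∑ i, cc i 1 * cc i 2) := by
        simp only [Finset.mul_sum, ← Finset.sum_add_distrib]
        exact Finset.sum_congr rfl fun i _ => by ring
      rw [ex]; linear_combination (-1) * R1
    · have ex : ∑ i, (cc i 0 + cc i 1 + cc i 2) * (cc i 3 + cc i 4 + cc i 5)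
          = (∑ i, cc i 0 * cc i 3) + (∑ i, cc i 0 * cc i 4) + (∑ i, cc i 0 * cc i 5)
          + (∑ i, cc i 1 * cc i 3) + (∑ i, cc i 1 * cc i 4) + (∑ i, cc i 1 * cc i 5)
          + (∑ i, cc i 2 * cc i 3) + (∑ i, cc i 2 * cc i 4) + (∑ i, cc i 2 * cc i 5) := by
        simp only [Finset.mul_sum, ← Finset.sum_add_distrib]
        exact Finset.sum_congr rfl fun i _ => by ring
      rw [ex]; linear_combination (-1) * R2
    · have ex : ∑ i, (cc i 3 + cc i 4 + cc i 5) ^ 2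
          = (∑ i, cc i 3 * cc i 3) + (∑ i, cc i 4 * cc i 4) + (∑ i, cc i 5 * cc i 5)
          + 2 * (∑ i, cc i 3 * cc i 4) + 2 * (∑ i, cc i 3 * cc i 5) + 2 * (∑ i, cc i 4 * cc i 5) := by
        simp only [Finset.mul_sum, ← Finset.sum_add_distrib]
        exact Finset.sum_congr rfl fun i _ => by ring
      rw [ex]; linear_combination (-1) * R3 + (-1) * R4
  · refine psd_of_sums
      (fun p : Fin k × Fin 3 => ![cc p.1 0 - cc p.1 1, cc p.1 1 - cc p.1 2, cc p.1 2 - cc p.1 0] p.2)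
      (fun p : Fin k × Fin 3 => ![cc p.1 4 - cc p.1 5, cc p.1 3 - cc p.1 4, cc p.1 5 - cc p.1 3] p.2)
      6 _ _ _ (by norm_num) ?_ ?_ ?_
    · have ht : ∑ p : Fin k × Fin 3,
          (![cc p.1 0 - cc p.1 1, cc p.1 1 - cc p.1 2, cc p.1 2 - cc p.1 0] p.2) ^ 2
          = ∑ i, ((cc i 0 - cc i 1) ^ 2 + (cc i 1 - cc i 2) ^ 2 + (cc i 2 - cc i 0) ^ 2) := by
        rw [Fintype.sum_prod_type]
        refine Finset.sum_congr rfl fun i _ => ?_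
        rw [Fin.sum_univ_three]
        norm_num
        rfl
      rw [ht]
      have ex : ∑ i, ((cc i 0 - cc i 1) ^ 2 + (cc i 1 - cc i 2) ^ 2 + (cc i 2 - cc i 0) ^ 2)
          = 2 * (∑ i, cc i 0 * cc i 0) + 2 * (∑ i, cc i 1 * cc i 1) + 2 * (∑ i, cc i 2 * cc i 2)
          - 2 * (∑ i, cc i 0 * cc i 1) - 2 * (∑ i, cc i 0 * cc i 2) - 2 * (∑ i, cc i 1 * cc i 2) := by
        simp only [Finset.mul_sum, ← Finset.sum_add_distrib, ← Finset.sum_sub_distrib]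
        exact Finset.sum_congr rfl fun i _ => by ring
      rw [ex]; linear_combination (-2) * R1
    · have ht : ∑ p : Fin k × Fin 3,
          (![cc p.1 0 - cc p.1 1, cc p.1 1 - cc p.1 2, cc p.1 2 - cc p.1 0] p.2) *
          (![cc p.1 4 - cc p.1 5, cc p.1 3 - cc p.1 4, cc p.1 5 - cc p.1 3] p.2)
          = ∑ i, ((cc i 0 - cc i 1) * (cc i 4 - cc i 5) + (cc i 1 - cc i 2) * (cc i 3 - cc i 4)
              + (cc i 2 - cc i 0) * (cc i 5 - cc i 3)) := by
        rw [Fintype.sum_prod_type]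
        refine Finset.sum_congr rfl fun i _ => ?_
        rw [Fin.sum_univ_three]
        norm_num
        rfl
      rw [ht]
      have ex : ∑ i, ((cc i 0 - cc i 1) * (cc i 4 - cc i 5) + (cc i 1 - cc i 2) * (cc i 3 - cc i 4)
              + (cc i 2 - cc i 0) * (cc i 5 - cc i 3))
          = (∑ i, cc i 0 * cc i 3) + (∑ i, cc i 0 * cc i 4) + (∑ i, cc i 1 * cc i 3)
          + (∑ i, cc i 1 * cc i 5) + (∑ i, cc i 2 * cc i 4) + (∑ i, cc i 2 * cc i 5)
          - 2 * (∑ i, cc i 0 * cc i 5) - 2 * (∑ i, cc i 1 * cc i 4) - 2 * (∑ i, cc i 2 * cc i 3) := by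
        simp only [Finset.mul_sum, ← Finset.sum_add_distrib, ← Finset.sum_sub_distrib]
        exact Finset.sum_congr rfl fun i _ => by ring
      rw [ex]; linear_combination (-1) * R2
    · have ht : ∑ p : Fin k × Fin 3,
          (![cc p.1 4 - cc p.1 5, cc p.1 3 - cc p.1 4, cc p.1 5 - cc p.1 3] p.2) ^ 2
          = ∑ i, ((cc i 4 - cc i 5) ^ 2 + (cc i 3 - cc i 4) ^ 2 + (cc i 5 - cc i 3) ^ 2) := by
        rw [Fintype.sum_prod_type]
        refine Finset.sum_congr rfl fun i _ => ?_
        rw [Fin.sum_univ_three]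
        norm_num
        rfl
      rw [ht]
      have ex : ∑ i, ((cc i 4 - cc i 5) ^ 2 + (cc i 3 - cc i 4) ^ 2 + (cc i 5 - cc i 3) ^ 2)
          = 2 * (∑ i, cc i 3 * cc i 3) + 2 * (∑ i, cc i 4 * cc i 4) + 2 * (∑ i, cc i 5 * cc i 5)
          - 2 * (∑ i, cc i 3 * cc i 4) - 2 * (∑ i, cc i 3 * cc i 5) - 2 * (∑ i, cc i 4 * cc i 5) := by
        simp only [Finset.mul_sum, ← Finset.sum_add_distrib, ← Finset.sum_sub_distrib]
        exact Finset.sum_congr rfl fun i _ => by ring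
      rw [ex]; linear_combination (-2) * R3 + R4

noncomputable def q8 (A1 B1 D1 A2 B2 D2 : ℝ) : Fin 8 → MvPolynomial (Fin 3) ℝ
  | 0 => C A1 * (X 0 ^ 2 + X 1 ^ 2 + X 2 ^ 2) + C B1 * (X 0 * X 1 + X 0 * X 2 + X 1 * X 2)
  | 1 => C D1 * (X 0 * X 1 + X 0 * X 2 + X 1 * X 2)
  | 2 => C A2 * (X 0 ^ 2 - X 1 ^ 2) + C B2 * (X 0 * X 2 - X 1 * X 2)
  | 3 => C D2 * (X 0 * X 2 - X 1 * X 2)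
  | 4 => C A2 * (X 1 ^ 2 - X 2 ^ 2) + C B2 * (X 0 * X 1 - X 0 * X 2)
  | 5 => C D2 * (X 0 * X 1 - X 0 * X 2)
  | 6 => C A2 * (X 2 ^ 2 - X 0 ^ 2) + C B2 * (X 1 * X 2 - X 0 * X 1)
  | 7 => C D2 * (X 1 * X 2 - X 0 * X 1)

theorem stmt17_backward (a b c d u v : ℝ)
    (h1 : (!![a + 2 * u, b + v; b + v, c + d - 2 * u - 2 * v]).PosSemidef)
    (h2 : (!![a - u, b / 2 - v; b / 2 - v, c - d / 2 - 2 * u + v]).PosSemidef) :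
    ∃ (k : ℕ) (q : Fin k → MvPolynomial (Fin 3) ℝ), bigF a b c d = ∑ i, q i ^ 2 := by
  rw [psd2] at h1 h2
  obtain ⟨α₁, β₁, δ₁, e1, e2, e3⟩ := sqrt_decomp _ _ _ h1.1 h1.2.1 h1.2.2
  obtain ⟨α₂, β₂, δ₂, e4, e5, e6⟩ := sqrt_decomp _ _ _ h2.1 h2.2.1 h2.2.2
  have hs3 : ((Real.sqrt 3)⁻¹) ^ 2 = 1 / 3 := by
    rw [inv_pow, Real.sq_sqrt (by norm_num : (0:ℝ) ≤ 3)]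
    norm_num
  set s : ℝ := (Real.sqrt 3)⁻¹ with hs
  refine ⟨8, q8 (α₁ * s) (β₁ * s) (δ₁ * s) (α₂ * s) (β₂ * s) (δ₂ * s), ?_⟩
  apply MvPolynomial.funext
  intro x
  rw [map_sum, Fin.sum_univ_eight]
  have hq0 : (q8 (α₁ * s) (β₁ * s) (δ₁ * s) (α₂ * s) (β₂ * s) (δ₂ * s)) 0
      = C (α₁ * s) * (X 0 ^ 2 + X 1 ^ 2 + X 2 ^ 2)
        + C (β₁ * s) * (X 0 * X 1 + X 0 * X 2 + X 1 * X 2) := rfl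
  have hq1 : (q8 (α₁ * s) (β₁ * s) (δ₁ * s) (α₂ * s) (β₂ * s) (δ₂ * s)) 1
      = C (δ₁ * s) * (X 0 * X 1 + X 0 * X 2 + X 1 * X 2) := rfl
  have hq2 : (q8 (α₁ * s) (β₁ * s) (δ₁ * s) (α₂ * s) (β₂ * s) (δ₂ * s)) 2
      = C (α₂ * s) * (X 0 ^ 2 - X 1 ^ 2) + C (β₂ * s) * (X 0 * X 2 - X 1 * X 2) := rfl
  have hq3 : (q8 (α₁ * s) (β₁ * s) (δ₁ * s) (α₂ * s) (β₂ * s) (δ₂ * s)) 3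
      = C (δ₂ * s) * (X 0 * X 2 - X 1 * X 2) := rfl
  have hq4 : (q8 (α₁ * s) (β₁ * s) (δ₁ * s) (α₂ * s) (β₂ * s) (δ₂ * s)) 4
      = C (α₂ * s) * (X 1 ^ 2 - X 2 ^ 2) + C (β₂ * s) * (X 0 * X 1 - X 0 * X 2) := rfl
  have hq5 : (q8 (α₁ * s) (β₁ * s) (δ₁ * s) (α₂ * s) (β₂ * s) (δ₂ * s)) 5
      = C (δ₂ * s) * (X 0 * X 1 - X 0 * X 2) := rfl
  have hq6 : (q8 (α₁ * s) (β₁ * s) (δ₁ * s) (α₂ * s) (β₂ * s) (δ₂ * s)) 6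
      = C (α₂ * s) * (X 2 ^ 2 - X 0 ^ 2) + C (β₂ * s) * (X 1 * X 2 - X 0 * X 1) := rfl
  have hq7 : (q8 (α₁ * s) (β₁ * s) (δ₁ * s) (α₂ * s) (β₂ * s) (δ₂ * s)) 7
      = C (δ₂ * s) * (X 1 * X 2 - X 0 * X 1) := rfl
  rw [hq0, hq1, hq2, hq3, hq4, hq5, hq6, hq7, fexp]
  simp only [map_add, _root_.map_mul, map_pow, map_sub, eval_C, eval_X]
  linear_combination
    ((x 0 ^ 2 + x 1 ^ 2 + x 2 ^ 2) ^ 2 / 3) * e1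
    + (2 * (x 0 ^ 2 + x 1 ^ 2 + x 2 ^ 2) * (x 0 * x 1 + x 0 * x 2 + x 1 * x 2) / 3) * e2
    + ((x 0 * x 1 + x 0 * x 2 + x 1 * x 2) ^ 2 / 3) * e3
    + (((x 0 ^ 2 - x 1 ^ 2) ^ 2 + (x 1 ^ 2 - x 2 ^ 2) ^ 2 + (x 2 ^ 2 - x 0 ^ 2) ^ 2) / 3) * e4
    + (2 * ((x 0 ^ 2 - x 1 ^ 2) * (x 0 * x 2 - x 1 * x 2)
        + (x 1 ^ 2 - x 2 ^ 2) * (x 0 * x 1 - x 0 * x 2)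
        + (x 2 ^ 2 - x 0 ^ 2) * (x 1 * x 2 - x 0 * x 1)) / 3) * e5
    + (((x 0 * x 2 - x 1 * x 2) ^ 2 + (x 0 * x 1 - x 0 * x 2) ^ 2
        + (x 1 * x 2 - x 0 * x 1) ^ 2) / 3) * e6
    - ((α₁ * (x 0 ^ 2 + x 1 ^ 2 + x 2 ^ 2) + β₁ * (x 0 * x 1 + x 0 * x 2 + x 1 * x 2)) ^ 2
      + δ₁ ^ 2 * (x 0 * x 1 + x 0 * x 2 + x 1 * x 2) ^ 2
      + (α₂ * (x 0 ^ 2 - x 1 ^ 2) + β₂ * (x 0 * x 2 - x 1 * x 2)) ^ 2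
      + δ₂ ^ 2 * (x 0 * x 2 - x 1 * x 2) ^ 2
      + (α₂ * (x 1 ^ 2 - x 2 ^ 2) + β₂ * (x 0 * x 1 - x 0 * x 2)) ^ 2
      + δ₂ ^ 2 * (x 0 * x 1 - x 0 * x 2) ^ 2
      + (α₂ * (x 2 ^ 2 - x 0 ^ 2) + β₂ * (x 1 * x 2 - x 0 * x 1)) ^ 2
      + δ₂ ^ 2 * (x 1 * x 2 - x 0 * x 1) ^ 2) * hs3

/-- from Theorem 5.4 and §5.1. A symmetric ternary quartic with
coefficients `a, b, c, d` is a sum of squares iff there exist `u = q₁₂`, `v = q₁₆`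
making both the trivial-isotypic and standard-isotypic `2×2` blocks positive
semidefinite. -/
theorem stmt_17 (a b c d : ℝ) :
    (∃ (k : ℕ) (q : Fin k → MvPolynomial (Fin 3) ℝ),
      (C a * ∑ i : Fin 3, X i ^ 4 +
        C b * ∑ i : Fin 3, ∑ j ∈ Finset.univ.erase i, X i ^ 3 * X j +
        C c * ∑ i : Fin 3, ∑ j ∈ Finset.Ioi i, X i ^ 2 * X j ^ 2 +
        C d * (X 0 ^ 2 * X 1 * X 2 + X 1 ^ 2 * X 0 * X 2 + X 2 ^ 2 * X 0 * X 1)) =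
        ∑ i : Fin k, q i ^ 2) ↔
    (∃ u v : ℝ,
      (!![a + 2 * u, b + v; b + v, c + d - 2 * u - 2 * v]).PosSemidef ∧
      (!![a - u, b / 2 - v; b / 2 - v, c - d / 2 - 2 * u + v]).PosSemidef) := by
  constructor
  · rintro ⟨k, q, hsos⟩
    exact stmt17_forward a b c d k q (by unfold bigF; exact hsos)
  · rintro ⟨u, v, h1, h2⟩
    obtain ⟨k, q, h⟩ := stmt17_backward a b c d u v h1 h2
    exact ⟨k, q, by unfold bigF at h; exact h⟩
end
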